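/- Let G = (V, E) be a compact topological packing graph, e ∈ V, and G^e the induced subgraph on V^e = {x ∈ V : x ≠ e and {e, x} ∉ E}. Then the three-point bound 1 + inf{F(e,e) : F ∈ C((V^e ∪ {e}) × (V^e ∪ {e}))_{⪰0}, F(x,x) + F(e,x) + F(x,e) ≤ −1 for all x with {e,x} ∈ I_{=2}, F(x,y) ≤ 0 for all x, y with {e,x,y} ∈ I_{=3}} equals 1 + las_1(G^e)*; the natural identification K(∅,∅) = F(e,e), K(∅,{x}) = K({x},∅) = F(e,x), K({x},{y}) = F(x,y) is a bijection between the two feasible regions preserving objective values. -/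

import Mathlib

open MeasureTheory Set Topology
open scoped NNReal ENNReal

noncomputable section

universe u

variable {V : Type u}

/-- A set of vertices is independent if it spans no edge of `G`. -/
def IndepVerts (G : SimpleGraph V) (S : Set V) : Prop :=
  ∀ ⦃x⦄, x ∈ S → ∀ ⦃y⦄, y ∈ S → ¬ G.Adj x y

/-- A graph on a topological vertex set is a (topological) packing graph if every finite
clique is contained in an open clique. -/
def IsPackingGraph [TopologicalSpace V] (G : SimpleGraph V) : Prop :=
  ∀ S : Set V, S.Finite → G.IsClique S → ∃ U : Set V, IsOpen U ∧ S ⊆ U ∧ G.IsClique U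

/-- The independence number: the supremum of cardinalities of (finite) independent sets. -/
def alphaNat (G : SimpleGraph V) : ℕ :=
  sSup {n : ℕ | ∃ S : Set V, IndepVerts G S ∧ S.Finite ∧ S.ncard = n}

/-- `sub_t(V)`: the subsets of `V` of cardinality at most `t`. -/
def SubAtMost (V : Type u) (t : ℕ) : Type u := {S : Set V // S.Finite ∧ S.ncard ≤ t}

/-- The map realizing `sub_t(V)` as a quotient of `V^t ⊕ {∅}`. -/
def qMap (V : Type u) (t : ℕ) : ((Fin t → V) ⊕ Unit) → SubAtMost V t
  | Sum.inl f => ⟨Set.range f, Set.finite_range f, by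
      rw [← Set.image_univ]
      refine le_trans (Set.ncard_image_le Set.finite_univ) ?_
      simp [Set.ncard_univ]⟩
  | Sum.inr _ => ⟨∅, Set.finite_empty, by simp⟩

/-- `sub_t(V)` carries the quotient topology of `V^t ⊕ {∅}` (product topology on `V^t`,
empty set adjoined via the disjoint union topology). -/
instance [TopologicalSpace V] (t : ℕ) : TopologicalSpace (SubAtMost V t) :=
  TopologicalSpace.coinduced (qMap V t) inferInstance

instance [TopologicalSpace V] (t : ℕ) : MeasurableSpace (SubAtMost V t) := borel _

/-- `I_t`: the independent sets of cardinality at most `t`, as a subspace of `sub_t(V)`. -/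
def IndepSpace [TopologicalSpace V] (G : SimpleGraph V) (t : ℕ) : Type u :=
  {S : SubAtMost V t // IndepVerts G S.1}

instance [TopologicalSpace V] (G : SimpleGraph V) (t : ℕ) :
    TopologicalSpace (IndepSpace G t) := by unfold IndepSpace; infer_instance

instance [TopologicalSpace V] (G : SimpleGraph V) (t : ℕ) :
    MeasurableSpace (IndepSpace G t) := by unfold IndepSpace; infer_instance

/-- The empty set as an element of `I_t`. -/
def emptyIndep [TopologicalSpace V] (G : SimpleGraph V) (t : ℕ) : IndepSpace G t :=
  ⟨⟨(∅ : Set V), Set.finite_empty, by simp⟩, by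
    intro x hx; exact absurd hx (Set.notMem_empty x)⟩

/-- A continuous kernel is positive definite if it is symmetric and all its finite
evaluation matrices are positive semidefinite. -/
def IsPosDefKernel {X : Type*} [TopologicalSpace X] (K : C(X × X, ℝ)) : Prop :=
  (∀ a b : X, K (a, b) = K (b, a)) ∧
    ∀ (m : ℕ) (x : Fin m → X) (c : Fin m → ℝ),
      0 ≤ ∑ i : Fin m, ∑ j : Fin m, c i * c j * K (x i, x j)

/-- The operator `A_t`, on plain functions: `A_t K (S) = ∑_{J ∪ J' = S} K(J, J')`. -/
def AtFun [TopologicalSpace V] (G : SimpleGraph V) (t : ℕ)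
    (K : IndepSpace G t × IndepSpace G t → ℝ) (S : IndepSpace G (2 * t)) : ℝ :=
  ∑ᶠ (p : IndepSpace G t × IndepSpace G t) (_ : p.1.1.1 ∪ p.2.1.1 = S.1.1), K p

/-- The objective value `λ(I_{=1})` of the generalized Lasserre hierarchy. -/
def lasObj [TopologicalSpace V] (G : SimpleGraph V) (t : ℕ)
    (μ : Measure (IndepSpace G (2 * t))) : ℝ :=
  (μ {S : IndepSpace G (2 * t) | S.1.1.ncard = 1}).toReal

/-- Feasibility for the `t`-th step of the generalized Lasserre hierarchy: `λ` is a
positive Radon measure on `I_{2t}` with `λ({∅}) = 1` and `A_t^* λ ⪰ 0`. -/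
def lasFeasible [TopologicalSpace V] (G : SimpleGraph V) (t : ℕ)
    (μ : Measure (IndepSpace G (2 * t))) : Prop :=
  IsFiniteMeasure μ ∧ μ.Regular ∧ μ {emptyIndep G (2 * t)} = 1 ∧
    ∀ K : C(IndepSpace G t × IndepSpace G t, ℝ), IsPosDefKernel K →
      0 ≤ ∫ S, AtFun G t (fun p => K p) S ∂μ

/-- `las_t(G)`, the value of the `t`-th step of the generalized Lasserre hierarchy. -/
def lasValue [TopologicalSpace V] (G : SimpleGraph V) (t : ℕ) : ℝ :=
  sSup {v : ℝ | ∃ μ : Measure (IndepSpace G (2 * t)), lasFeasible G t μ ∧ v = lasObj G t μ}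

/-- Feasibility for the dual program `las_t(G)^*`. -/
def lasDualFeasible [TopologicalSpace V] (G : SimpleGraph V) (t : ℕ)
    (K : C(IndepSpace G t × IndepSpace G t, ℝ)) : Prop :=
  IsPosDefKernel K ∧
    ∀ S : IndepSpace G (2 * t), S ≠ emptyIndep G (2 * t) →
      AtFun G t (fun p => K p) S ≤ if S.1.1.ncard = 1 then -1 else 0

/-- `las_t(G)^*`, the value of the dual of the `t`-th step of the hierarchy. -/
def lasDualValue [TopologicalSpace V] (G : SimpleGraph V) (t : ℕ) : ℝ :=
  sInf {v : ℝ | ∃ K : C(IndepSpace G t × IndepSpace G t, ℝ),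
    lasDualFeasible G t K ∧ v = K (emptyIndep G t, emptyIndep G t)}

/-- The vertex set `V^e = {x ∈ V : x ≠ e, {e,x} ∉ E}` of the subgraph `G^e`. -/
def Vsub (G : SimpleGraph V) (e : V) : Set V := {x : V | x ≠ e ∧ ¬ G.Adj e x}

/-- The induced subgraph `G^e` of `G` on `V^e`. -/
def Gsub [TopologicalSpace V] (G : SimpleGraph V) (e : V) : SimpleGraph (Vsub G e) :=
  SimpleGraph.comap Subtype.val G

/-- The inclusion `I_t(G^e) → I_t(G)` of independent sets of the subgraph into those of `G`. -/
def liftIndep [TopologicalSpace V] (G : SimpleGraph V) (e : V) (t : ℕ) :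
    IndepSpace (Gsub G e) t → IndepSpace G t := fun S =>
  ⟨⟨Subtype.val '' S.1.1, S.1.2.1.image _, by
      rw [Set.ncard_image_of_injective _ Subtype.val_injective]; exact S.1.2.2⟩, by
    rintro x ⟨x', hx', rfl⟩ y ⟨y', hy', rfl⟩ hadj
    exact S.2 hx' hy' hadj⟩

/-- The singleton `{e}` as an element of `I_t(G)`, for `t ≥ 1`. -/
def singletonIndep [TopologicalSpace V] (G : SimpleGraph V) (t : ℕ) (e : V)
    (ht : 1 ≤ t) : IndepSpace G t :=
  ⟨⟨({e} : Set V), Set.finite_singleton e, by simpa using ht⟩, by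
    intro x hx y hy hadj
    rw [Set.mem_singleton_iff] at hx hy
    subst hx; subst hy
    exact G.irrefl hadj⟩
section ThreePoint

variable [TopologicalSpace V] (G : SimpleGraph V) (e : V)

/-- The vertex `e` as an element of `V^e ∪ {e}`. -/
def basePt : ↥(insert e (Vsub G e)) := ⟨e, Set.mem_insert e _⟩

/-- A vertex of `V^e` as an element of `V^e ∪ {e}`. -/
def inVe (x : Vsub G e) : ↥(insert e (Vsub G e)) := ⟨x.1, Set.mem_insert_of_mem e x.2⟩

/-- Feasibility for the three-point bound: `F ∈ C((V^e ∪ {e}) × (V^e ∪ {e}))_{⪰0}`,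
`F(x,x) + F(e,x) + F(x,e) ≤ −1` whenever `{e,x} ∈ I_{=2}`, and `F(x,y) ≤ 0` whenever
`{e,x,y} ∈ I_{=3}`. -/
def threePointFeasible (F : C(↥(insert e (Vsub G e)) × ↥(insert e (Vsub G e)), ℝ)) : Prop :=
  IsPosDefKernel F ∧
    (∀ x : Vsub G e,
      F (inVe G e x, inVe G e x) + F (basePt G e, inVe G e x) + F (inVe G e x, basePt G e)
        ≤ -1) ∧
    ∀ x y : Vsub G e, (x : V) ≠ (y : V) → ¬ G.Adj x y → F (inVe G e x, inVe G e y) ≤ 0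

/-- The value of the three-point bound (without the added constant `1`). -/
def threePointValue : ℝ :=
  sInf {v : ℝ | ∃ F : C(↥(insert e (Vsub G e)) × ↥(insert e (Vsub G e)), ℝ),
    threePointFeasible G e F ∧ v = F (basePt G e, basePt G e)}

/-- The natural identification between kernels for the three-point bound and kernels for
`las_1(G^e)^*`: `K(∅,∅) = F(e,e)`, `K(∅,{x}) = K({x},∅) = F(e,x)`, `K({x},{y}) = F(x,y)`. -/
def threePointCorresponds (F : C(↥(insert e (Vsub G e)) × ↥(insert e (Vsub G e)), ℝ))
    (K : C(IndepSpace (Gsub G e) 1 × IndepSpace (Gsub G e) 1, ℝ)) : Prop :=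
  K (emptyIndep (Gsub G e) 1, emptyIndep (Gsub G e) 1) = F (basePt G e, basePt G e) ∧
  (∀ x : Vsub G e,
    K (emptyIndep (Gsub G e) 1, singletonIndep (Gsub G e) 1 x le_rfl) =
        F (basePt G e, inVe G e x) ∧
      K (singletonIndep (Gsub G e) 1 x le_rfl, emptyIndep (Gsub G e) 1) =
        F (inVe G e x, basePt G e)) ∧
  ∀ x y : Vsub G e,
    K (singletonIndep (Gsub G e) 1 x le_rfl, singletonIndep (Gsub G e) 1 y le_rfl) =
      F (inVe G e x, inVe G e y)

end ThreePoint

section Aux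

open scoped Classical

variable {V : Type u} [TopologicalSpace V] (G : SimpleGraph V) (e : V)

lemma indepSpace_ext {V : Type u} [TopologicalSpace V] {G' : SimpleGraph V} {t : ℕ}
    {S T : IndepSpace G' t} (h : S.1.1 = T.1.1) : S = T :=
  Subtype.ext (Subtype.ext h)

lemma small_cases {α : Type*} {s : Set α} (hfin : s.Finite) (h : s.ncard ≤ 1) :
    s = ∅ ∨ ∃ a, s = {a} := (Set.ncard_le_one_iff_eq hfin).mp h

/-- Every element of `I_1(G^e)` is either the empty set or a singleton. -/
lemma Ie_cases (S : IndepSpace (Gsub G e) 1) :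
    S = emptyIndep (Gsub G e) 1 ∨ ∃ x, S = singletonIndep (Gsub G e) 1 x le_rfl := by
  rcases small_cases S.1.2.1 S.1.2.2 with h | ⟨a, h⟩
  · exact Or.inl (indepSpace_ext h)
  · exact Or.inr ⟨a, indepSpace_ext h⟩

/-- The map `I_1(G^e) → V^e ∪ {e}`, sending `∅` to `e` and `{x}` to `x`. -/
def psiMap (S : IndepSpace (Gsub G e) 1) : ↥(insert e (Vsub G e)) :=
  if h : S.1.1.Nonempty then inVe G e h.some else basePt G e

/-- The map `V^e ∪ {e} → I_1(G^e)`, sending `e` to `∅` and `x` to `{x}`. -/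
def phiMap (x : ↥(insert e (Vsub G e))) : IndepSpace (Gsub G e) 1 :=
  if h : (x : V) = e then emptyIndep (Gsub G e) 1
  else singletonIndep (Gsub G e) 1 ⟨x.1, (Set.mem_insert_iff.mp x.2).resolve_left h⟩ le_rfl

lemma psi_empty : psiMap G e (emptyIndep (Gsub G e) 1) = basePt G e := by
  simp [psiMap, emptyIndep]

lemma psi_single (x : Vsub G e) :
    psiMap G e (singletonIndep (Gsub G e) 1 x le_rfl) = inVe G e x := by
  have h : (({x} : Set (Vsub G e))).Nonempty := ⟨x, rfl⟩
  have hx : h.some = x := h.some_mem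
  simp only [psiMap, singletonIndep, dif_pos h, hx]

lemma phi_base : phiMap G e (basePt G e) = emptyIndep (Gsub G e) 1 := dif_pos rfl

lemma phi_inVe (x : Vsub G e) :
    phiMap G e (inVe G e x) = singletonIndep (Gsub G e) 1 x le_rfl := by
  have hx : ((inVe G e x : V)) ≠ e := x.2.1
  rw [phiMap, dif_neg hx]
  exact indepSpace_ext
    (congrArg (fun a : ↥(Vsub G e) => ({a} : Set (↥(Vsub G e)))) (Subtype.ext rfl))

lemma phi_psi (S : IndepSpace (Gsub G e) 1) : phiMap G e (psiMap G e S) = S := by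
  rcases Ie_cases G e S with rfl | ⟨x, rfl⟩
  · rw [psi_empty, phi_base]
  · rw [psi_single, phi_inVe]

lemma Xe_cases (x : ↥(insert e (Vsub G e))) :
    x = basePt G e ∨ ∃ y : Vsub G e, x = inVe G e y := by
  rcases Set.mem_insert_iff.mp x.2 with h | h
  · exact Or.inl (Subtype.ext h)
  · exact Or.inr ⟨⟨x.1, h⟩, Subtype.ext rfl⟩

lemma psi_phi (x : ↥(insert e (Vsub G e))) : psiMap G e (phiMap G e x) = x := by
  rcases Xe_cases G e x with rfl | ⟨y, rfl⟩
  · rw [phi_base, psi_empty]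
  · rw [phi_inVe, psi_single]

/-- `psiMap` is continuous (for the quotient topology on `I_1`). -/
lemma psi_continuous : Continuous (psiMap G e) := by
  have key : Continuous (fun S : SubAtMost (↥(Vsub G e)) 1 =>
      if h : S.1.Nonempty then inVe G e h.some else basePt G e) := by
    refine continuous_coinduced_dom.mpr ?_
    have heq : ((fun S : SubAtMost (↥(Vsub G e)) 1 =>
        if h : S.1.Nonempty then inVe G e h.some else basePt G e) ∘ qMap (↥(Vsub G e)) 1) =
        Sum.elim (fun f : Fin 1 → ↥(Vsub G e) => inVe G e (f 0)) (fun _ => basePt G e) := by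
      funext p
      cases p with
      | inl f =>
          have hne : (Set.range f).Nonempty := ⟨f 0, Set.mem_range_self 0⟩
          have hsome : hne.some = f 0 := by
            obtain ⟨i, hi⟩ := hne.some_mem
            rw [← hi]
            congr 1
            exact Subsingleton.elim i 0
          simp [qMap, Function.comp, dif_pos hne, hsome]
      | inr u => simp [qMap, Function.comp]
    rw [heq]
    exact Continuous.sumElim
      (Continuous.subtype_mk (continuous_subtype_val.comp (continuous_apply 0)) _)
      continuous_const
  exact key.comp continuous_subtype_val

lemma adj_open [T1Space V] (hG : IsPackingGraph G) : IsOpen {x | G.Adj e x} := by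
  rw [isOpen_iff_forall_mem_open]
  intro x hx
  have hx' : G.Adj e x := hx
  have hclq : G.IsClique {e, x} := by
    intro a ha b hb hab
    rcases Set.mem_insert_iff.mp ha with rfl | ha
    · rcases Set.mem_insert_iff.mp hb with rfl | hb
      · exact absurd rfl hab
      · rw [Set.mem_singleton_iff] at hb; subst hb; exact hx'
    · rw [Set.mem_singleton_iff] at ha; subst ha
      rcases Set.mem_insert_iff.mp hb with rfl | hb
      · exact hx'.symm
      · rw [Set.mem_singleton_iff] at hb; subst hb; exact absurd rfl hab
  obtain ⟨U, hU, hsub, hclique⟩ := hG {e, x} (Set.toFinite _) hclq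
  refine ⟨U \ {e}, ?_, hU.sdiff isClosed_singleton,
    ⟨hsub (Set.mem_insert_of_mem e rfl),
      fun h => (G.ne_of_adj hx') ((Set.mem_singleton_iff.mp h).symm)⟩⟩
  rintro y ⟨hyU, hye⟩
  have hye' : y ≠ e := fun h => hye (Set.mem_singleton_iff.mpr h)
  exact hclique (hsub (Set.mem_insert e {x})) hyU hye'.symm

lemma insert_vsub_eq : insert e (Vsub G e) = {x | G.Adj e x}ᶜ := by
  ext x
  simp only [Set.mem_insert_iff, Set.mem_compl_iff, Set.mem_setOf_eq, Vsub]
  constructor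
  · rintro (rfl | ⟨-, h⟩)
    · exact G.irrefl
    · exact h
  · intro h
    by_cases hx : x = e
    · exact Or.inl hx
    · exact Or.inr ⟨hx, h⟩

lemma vsub_closed [T1Space V] (hG : IsPackingGraph G) : IsClosed (Vsub G e) := by
  obtain ⟨U, hU, hsub, hclique⟩ := hG {e} (Set.finite_singleton e)
    (by intro a ha b hb hab; rw [Set.mem_singleton_iff] at ha hb; subst ha; subst hb;
        exact absurd rfl hab)
  have heU : e ∈ U := hsub rfl
  have : Vsub G e = (insert e (Vsub G e)) ∩ Uᶜ := by
    ext x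
    constructor
    · intro hx
      refine ⟨Set.mem_insert_of_mem e hx, fun hxU => hx.2 ?_⟩
      exact hclique heU hxU (Ne.symm hx.1)
    · rintro ⟨hx, hxU⟩
      rcases Set.mem_insert_iff.mp hx with rfl | hx
      · exact absurd heU hxU
      · exact hx
  rw [this, insert_vsub_eq]
  exact ((adj_open G e hG).isClosed_compl).inter hU.isClosed_compl

/-- All sets in `sub_1(V^e)` are independent. -/
lemma indep_of_small (S : SubAtMost (↥(Vsub G e)) 1) : IndepVerts (Gsub G e) S.1 := by
  intro x hx y hy hadj
  have hxy : x = y := (Set.ncard_le_one_iff S.2.1).mp S.2.2 hx hy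
  subst hxy
  exact (Gsub G e).irrefl hadj

lemma compact_Ie [CompactSpace V] [T2Space V] (hG : IsPackingGraph G) :
    CompactSpace (IndepSpace (Gsub G e) 1) := by
  haveI : CompactSpace (↥(Vsub G e)) :=
    isCompact_iff_compactSpace.mp ((vsub_closed G e hG).isCompact)
  set σ : ((Fin 1 → ↥(Vsub G e)) ⊕ Unit) → IndepSpace (Gsub G e) 1 :=
    fun p => ⟨qMap (↥(Vsub G e)) 1 p, indep_of_small G e _⟩ with hσ
  have hcont : Continuous σ := Continuous.subtype_mk continuous_coinduced_rng _
  have hsurj : Function.Surjective σ := by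
    intro S
    rcases Ie_cases G e S with rfl | ⟨x, rfl⟩
    · exact ⟨Sum.inr (), indepSpace_ext rfl⟩
    · refine ⟨Sum.inl (fun _ => x), indepSpace_ext ?_⟩
      simp [hσ, qMap, Set.range_const, singletonIndep]
  exact ⟨hsurj.range_eq ▸ isCompact_range hcont⟩

/-- The identification `I_1(G^e) ≃ V^e ∪ {e}`. -/
def psiEquiv : IndepSpace (Gsub G e) 1 ≃ ↥(insert e (Vsub G e)) :=
  ⟨psiMap G e, phiMap G e, phi_psi G e, psi_phi G e⟩

lemma phi_continuous [CompactSpace V] [T2Space V] (hG : IsPackingGraph G) :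
    Continuous (phiMap G e) := by
  haveI := compact_Ie G e hG
  exact (Continuous.homeoOfEquivCompactToT2 (f := psiEquiv G e)
    (psi_continuous G e)).symm.continuous

/-- Transfer of kernels from the three-point program to `las_1^*`. -/
def toK (F : C(↥(insert e (Vsub G e)) × ↥(insert e (Vsub G e)), ℝ)) :
    C(IndepSpace (Gsub G e) 1 × IndepSpace (Gsub G e) 1, ℝ) :=
  ⟨fun p => F (psiMap G e p.1, psiMap G e p.2),
    F.continuous.comp (((psi_continuous G e).comp continuous_fst).prodMk
      ((psi_continuous G e).comp continuous_snd))⟩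

/-- Transfer of kernels from `las_1^*` to the three-point program. -/
def toF (hphi : Continuous (phiMap G e))
    (K : C(IndepSpace (Gsub G e) 1 × IndepSpace (Gsub G e) 1, ℝ)) :
    C(↥(insert e (Vsub G e)) × ↥(insert e (Vsub G e)), ℝ) :=
  ⟨fun p => K (phiMap G e p.1, phiMap G e p.2),
    K.continuous.comp ((hphi.comp continuous_fst).prodMk (hphi.comp continuous_snd))⟩

lemma finsum_mem_triple {α : Type*} {a b c : α} (hab : a ≠ b) (hac : a ≠ c) (hbc : b ≠ c)
    (f : α → ℝ) : ∑ᶠ i ∈ ({a, b, c} : Set α), f i = f a + f b + f c := by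
  classical
  rw [show ({a, b, c} : Set α) = ((({a, b, c} : Finset α) : Set α)) by simp,
    finsum_mem_coe_finset, Finset.sum_insert (by simp [hab, hac]), Finset.sum_pair hbc,
    add_assoc]

lemma E_ne_X (x : Vsub G e) :
    emptyIndep (Gsub G e) 1 ≠ singletonIndep (Gsub G e) 1 x le_rfl := by
  intro h
  exact (Set.singleton_ne_empty x) (congrArg (fun S : IndepSpace (Gsub G e) 1 => S.1.1) h).symm

lemma X_ne_X {x y : Vsub G e} (h : x ≠ y) :
    singletonIndep (Gsub G e) 1 x le_rfl ≠ singletonIndep (Gsub G e) 1 y le_rfl := by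
  intro hc
  exact h (Set.singleton_eq_singleton_iff.mp
    (congrArg (fun S : IndepSpace (Gsub G e) 1 => S.1.1) hc))

lemma atFun_single (K : IndepSpace (Gsub G e) 1 × IndepSpace (Gsub G e) 1 → ℝ)
    (S : IndepSpace (Gsub G e) (2 * 1)) (x : Vsub G e) (hS : S.1.1 = {x}) :
    AtFun (Gsub G e) 1 K S =
      K (emptyIndep (Gsub G e) 1, singletonIndep (Gsub G e) 1 x le_rfl) +
      K (singletonIndep (Gsub G e) 1 x le_rfl, emptyIndep (Gsub G e) 1) +
      K (singletonIndep (Gsub G e) 1 x le_rfl, singletonIndep (Gsub G e) 1 x le_rfl) := by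
  set E := emptyIndep (Gsub G e) 1
  set X := singletonIndep (Gsub G e) 1 x le_rfl with hX
  have hset : {p : IndepSpace (Gsub G e) 1 × IndepSpace (Gsub G e) 1 |
      p.1.1.1 ∪ p.2.1.1 = S.1.1} = {(E, X), (X, E), (X, X)} := by
    ext ⟨p1, p2⟩
    simp only [Set.mem_setOf_eq, hS, Set.mem_insert_iff, Set.mem_singleton_iff]
    constructor
    · intro h
      have h1 : p1.1.1 ⊆ {x} := h ▸ Set.subset_union_left
      have h2 : p2.1.1 ⊆ {x} := h ▸ Set.subset_union_right
      rcases Set.subset_singleton_iff_eq.mp h1 with e1 | e1 <;>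
        rcases Set.subset_singleton_iff_eq.mp h2 with e2 | e2
      · rw [e1, e2, Set.union_empty] at h
        exact absurd h.symm (Set.singleton_ne_empty x)
      · exact Or.inl (Prod.ext (indepSpace_ext e1) (indepSpace_ext e2))
      · exact Or.inr (Or.inl (Prod.ext (indepSpace_ext e1) (indepSpace_ext e2)))
      · exact Or.inr (Or.inr (Prod.ext (indepSpace_ext e1) (indepSpace_ext e2)))
    · rintro (h | h | h) <;> rw [Prod.ext_iff] at h <;>
        rw [congrArg (fun S : IndepSpace (Gsub G e) 1 => S.1.1) h.1,
          congrArg (fun S : IndepSpace (Gsub G e) 1 => S.1.1) h.2] <;>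
        simp [E, hX, emptyIndep, singletonIndep]
  have hEX : E ≠ X := E_ne_X G e x
  calc AtFun (Gsub G e) 1 K S
      = ∑ᶠ p ∈ {p : IndepSpace (Gsub G e) 1 × IndepSpace (Gsub G e) 1 |
          p.1.1.1 ∪ p.2.1.1 = S.1.1}, K p := rfl
    _ = K (E, X) + K (X, E) + K (X, X) := by
        rw [hset]
        exact finsum_mem_triple
          (fun h => hEX (congrArg Prod.fst h))
          (fun h => hEX (congrArg Prod.fst h))
          (fun h => hEX (congrArg Prod.snd h)) K

lemma atFun_pair (K : IndepSpace (Gsub G e) 1 × IndepSpace (Gsub G e) 1 → ℝ)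
    (S : IndepSpace (Gsub G e) (2 * 1)) (x y : Vsub G e) (hxy : x ≠ y)
    (hS : S.1.1 = {x, y}) :
    AtFun (Gsub G e) 1 K S =
      K (singletonIndep (Gsub G e) 1 x le_rfl, singletonIndep (Gsub G e) 1 y le_rfl) +
      K (singletonIndep (Gsub G e) 1 y le_rfl, singletonIndep (Gsub G e) 1 x le_rfl) := by
  set X := singletonIndep (Gsub G e) 1 x le_rfl with hXdef
  set Y := singletonIndep (Gsub G e) 1 y le_rfl with hYdef
  have hset : {p : IndepSpace (Gsub G e) 1 × IndepSpace (Gsub G e) 1 |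
      p.1.1.1 ∪ p.2.1.1 = S.1.1} = {(X, Y), (Y, X)} := by
    ext ⟨p1, p2⟩
    simp only [Set.mem_setOf_eq, hS, Set.mem_insert_iff, Set.mem_singleton_iff]
    constructor
    · intro h
      have hx : x ∈ p1.1.1 ∪ p2.1.1 := by rw [h]; exact Set.mem_insert x {y}
      have hy : y ∈ p1.1.1 ∪ p2.1.1 := by
        rw [h]; exact Set.mem_insert_of_mem x rfl
      rcases small_cases p1.1.2.1 p1.1.2.2 with e1 | ⟨a, e1⟩ <;>
        rcases small_cases p2.1.2.1 p2.1.2.2 with e2 | ⟨b, e2⟩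
      · rw [e1, e2] at h
        rw [Set.union_empty] at h
        exact absurd h.symm (Set.nonempty_iff_ne_empty.mp (Set.insert_nonempty x {y}))
      · exfalso
        rw [e1, e2, Set.empty_union] at h
        have hx' : x ∈ ({b} : Set (↥(Vsub G e))) := by rw [h]; exact Set.mem_insert x {y}
        have hy' : y ∈ ({b} : Set (↥(Vsub G e))) := by rw [h]; exact Set.mem_insert_of_mem x rfl
        rw [Set.mem_singleton_iff] at hx' hy'
        exact hxy (hx'.trans hy'.symm)
      · exfalso
        rw [e1, e2, Set.union_empty] at h
        have hx' : x ∈ ({a} : Set (↥(Vsub G e))) := by rw [h]; exact Set.mem_insert x {y}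
        have hy' : y ∈ ({a} : Set (↥(Vsub G e))) := by rw [h]; exact Set.mem_insert_of_mem x rfl
        rw [Set.mem_singleton_iff] at hx' hy'
        exact hxy (hx'.trans hy'.symm)
      · rw [e1, e2] at hx hy
        rcases hx with hx | hx <;> rcases hy with hy | hy
        · rw [Set.mem_singleton_iff] at hx hy
          exact absurd (hx.trans hy.symm) hxy
        · rw [Set.mem_singleton_iff] at hx hy
          subst hx; subst hy
          exact Or.inl (Prod.ext (indepSpace_ext e1) (indepSpace_ext e2))
        · rw [Set.mem_singleton_iff] at hx hy
          subst hx; subst hy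
          exact Or.inr (Prod.ext (indepSpace_ext e1) (indepSpace_ext e2))
        · rw [Set.mem_singleton_iff] at hx hy
          exact absurd (hx.trans hy.symm) hxy
    · rintro (h | h) <;> rw [Prod.ext_iff] at h <;>
        rw [congrArg (fun S : IndepSpace (Gsub G e) 1 => S.1.1) h.1,
          congrArg (fun S : IndepSpace (Gsub G e) 1 => S.1.1) h.2] <;>
        simp [hXdef, hYdef, singletonIndep, Set.singleton_union, Set.pair_comm y x]
  have hXY : X ≠ Y := X_ne_X G e hxy
  calc AtFun (Gsub G e) 1 K S
      = ∑ᶠ p ∈ {p : IndepSpace (Gsub G e) 1 × IndepSpace (Gsub G e) 1 |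
          p.1.1.1 ∪ p.2.1.1 = S.1.1}, K p := rfl
    _ = K (X, Y) + K (Y, X) := by
        rw [hset]
        exact finsum_mem_pair (a := (X, Y)) (b := (Y, X)) (f := K)
          (fun h => hXY (congrArg Prod.fst h))

/-- `{x}` as an element of `I_2(G^e)`. -/
def mkS1 (x : Vsub G e) : IndepSpace (Gsub G e) (2 * 1) :=
  ⟨⟨{x}, Set.finite_singleton x, by rw [Set.ncard_singleton]; omega⟩, by
    intro a ha b hb hadj
    rw [Set.mem_singleton_iff] at ha hb
    subst ha; subst hb
    exact (Gsub G e).irrefl hadj⟩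

/-- `{x, y}` as an element of `I_2(G^e)`. -/
def mkS2 (x y : Vsub G e) (hxy : x ≠ y) (hna : ¬ G.Adj ↑x ↑y) :
    IndepSpace (Gsub G e) (2 * 1) :=
  ⟨⟨{x, y}, Set.toFinite _, by rw [Set.ncard_pair hxy]⟩, by
    intro a ha b hb hadj
    rcases Set.mem_insert_iff.mp ha with rfl | ha
    · rcases Set.mem_insert_iff.mp hb with rfl | hb
      · exact (Gsub G e).irrefl hadj
      · rw [Set.mem_singleton_iff] at hb; subst hb; exact hna hadj
    · rw [Set.mem_singleton_iff] at ha; subst ha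
      rcases Set.mem_insert_iff.mp hb with rfl | hb
      · exact hna hadj.symm
      · rw [Set.mem_singleton_iff] at hb; subst hb; exact (Gsub G e).irrefl hadj⟩

lemma toK_corr (F : C(↥(insert e (Vsub G e)) × ↥(insert e (Vsub G e)), ℝ)) :
    threePointCorresponds G e F (toK G e F) := by
  refine ⟨?_, fun x => ⟨?_, ?_⟩, fun x y => ?_⟩ <;>
    simp [toK, psi_empty, psi_single]

lemma toK_feasible {F : C(↥(insert e (Vsub G e)) × ↥(insert e (Vsub G e)), ℝ)}
    (hF : threePointFeasible G e F) : lasDualFeasible (Gsub G e) 1 (toK G e F) := by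
  obtain ⟨⟨hsymm, hpsd⟩, h1, h2⟩ := hF
  refine ⟨⟨fun a b => hsymm _ _, fun m x c => ?_⟩, ?_⟩
  · exact hpsd m (fun i => psiMap G e (x i)) c
  · intro S hSne
    have hSne' : S.1.1.Nonempty := by
      rw [Set.nonempty_iff_ne_empty]
      exact fun h => hSne (indepSpace_ext h)
    have hcard : S.1.1.ncard = 1 ∨ S.1.1.ncard = 2 := by
      have h1' : 0 < S.1.1.ncard := (Set.ncard_pos S.1.2.1).mpr hSne'
      have h2' : S.1.1.ncard ≤ 2 * 1 := S.1.2.2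
      omega
    rcases hcard with hc | hc
    · obtain ⟨x, hx⟩ := Set.ncard_eq_one.mp hc
      rw [atFun_single G e _ S x hx, if_pos hc]
      have := h1 x
      simp only [toK, ContinuousMap.coe_mk, psi_empty, psi_single]
      linarith
    · obtain ⟨x, y, hxy, hxyS⟩ := Set.ncard_eq_two.mp hc
      rw [atFun_pair G e _ S x y hxy hxyS, if_neg (by omega)]
      have hxm : x ∈ S.1.1 := by rw [hxyS]; exact Set.mem_insert x {y}
      have hym : y ∈ S.1.1 := by rw [hxyS]; exact Set.mem_insert_of_mem x rfl
      have hna : ¬ G.Adj ↑x ↑y := S.2 hxm hym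
      have hne : (↑x : V) ≠ ↑y := Subtype.coe_injective.ne hxy
      have hxy1 := h2 x y hne hna
      have hxy2 := h2 y x hne.symm (fun h => hna h.symm)
      simp only [toK, ContinuousMap.coe_mk, psi_single]
      linarith

lemma toF_corr (hphi : Continuous (phiMap G e))
    (K : C(IndepSpace (Gsub G e) 1 × IndepSpace (Gsub G e) 1, ℝ)) :
    threePointCorresponds G e (toF G e hphi K) K := by
  refine ⟨?_, fun x => ⟨?_, ?_⟩, fun x y => ?_⟩ <;>
    simp [toF, phi_base, phi_inVe]

lemma toF_feasible (hphi : Continuous (phiMap G e))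
    {K : C(IndepSpace (Gsub G e) 1 × IndepSpace (Gsub G e) 1, ℝ)}
    (hK : lasDualFeasible (Gsub G e) 1 K) :
    threePointFeasible G e (toF G e hphi K) := by
  obtain ⟨⟨hsymm, hpsd⟩, hcon⟩ := hK
  refine ⟨⟨fun a b => hsymm _ _, fun m x c => ?_⟩, ?_, ?_⟩
  · exact hpsd m (fun i => phiMap G e (x i)) c
  · intro x
    have hne : mkS1 G e x ≠ emptyIndep (Gsub G e) (2 * 1) := by
      intro h
      exact (Set.singleton_ne_empty x)
        (congrArg (fun S : IndepSpace (Gsub G e) (2 * 1) => S.1.1) h)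
    have := hcon (mkS1 G e x) hne
    rw [atFun_single G e _ (mkS1 G e x) x rfl,
      if_pos (show ((mkS1 G e x).1.1).ncard = 1 from Set.ncard_singleton x)] at this
    simp only [toF, ContinuousMap.coe_mk, phi_base, phi_inVe]
    linarith
  · intro x y hne hna
    have hxy : x ≠ y := fun h => hne (congrArg Subtype.val h)
    have hne' : mkS2 G e x y hxy hna ≠ emptyIndep (Gsub G e) (2 * 1) := by
      intro h
      exact (Set.nonempty_iff_ne_empty.mp (Set.insert_nonempty x {y}))
        (congrArg (fun S : IndepSpace (Gsub G e) (2 * 1) => S.1.1) h)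
    have hle := hcon (mkS2 G e x y hxy hna) hne'
    rw [atFun_pair G e _ (mkS2 G e x y hxy hna) x y hxy rfl,
      if_neg (by rw [show ((mkS2 G e x y hxy hna).1.1.ncard) = 2 from Set.ncard_pair hxy]
                 omega)] at hle
    have hs := hsymm (singletonIndep (Gsub G e) 1 x le_rfl) (singletonIndep (Gsub G e) 1 y le_rfl)
    simp only [toF, ContinuousMap.coe_mk, phi_inVe]
    linarith

lemma corr_unique_K {F : C(↥(insert e (Vsub G e)) × ↥(insert e (Vsub G e)), ℝ)}
    {K : C(IndepSpace (Gsub G e) 1 × IndepSpace (Gsub G e) 1, ℝ)}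
    (h : threePointCorresponds G e F K) : K = toK G e F := by
  ext p
  obtain ⟨S, T⟩ := p
  rcases Ie_cases G e S with rfl | ⟨x, rfl⟩ <;> rcases Ie_cases G e T with rfl | ⟨y, rfl⟩ <;>
    simp [toK, psi_empty, psi_single, h.1, (h.2.1 _).1, (h.2.1 _).2, h.2.2]

lemma corr_unique_F (hphi : Continuous (phiMap G e))
    {F : C(↥(insert e (Vsub G e)) × ↥(insert e (Vsub G e)), ℝ)}
    {K : C(IndepSpace (Gsub G e) 1 × IndepSpace (Gsub G e) 1, ℝ)}
    (h : threePointCorresponds G e F K) : F = toF G e hphi K := by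
  ext p
  obtain ⟨a, b⟩ := p
  rcases Xe_cases G e a with rfl | ⟨x, rfl⟩ <;> rcases Xe_cases G e b with rfl | ⟨y, rfl⟩ <;>
    simp [toF, phi_base, phi_inVe, ← h.1, ← (h.2.1 _).1, ← (h.2.1 _).2, ← h.2.2]

end Aux

/-- For a compact topological packing graph `G` and `e ∈ V`, the three-point
bound `1 + inf{F(e,e) : …}` equals `1 + las_1(G^e)^*`; moreover the natural identification
between kernels is a bijection between the two feasible regions preserving objective
values. -/
theorem threePoint_bound_eq_lasDual_one_of_subgraph
    {V : Type u} [TopologicalSpace V] [CompactSpace V] [T2Space V]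
    (G : SimpleGraph V) (hG : IsPackingGraph G) (e : V) :
    ((1 : ℝ) + threePointValue G e = 1 + lasDualValue (Gsub G e) 1) ∧
    (∀ F : C(↥(insert e (Vsub G e)) × ↥(insert e (Vsub G e)), ℝ), threePointFeasible G e F →
      ∃! K : C(IndepSpace (Gsub G e) 1 × IndepSpace (Gsub G e) 1, ℝ),
        lasDualFeasible (Gsub G e) 1 K ∧ threePointCorresponds G e F K) ∧
    (∀ K : C(IndepSpace (Gsub G e) 1 × IndepSpace (Gsub G e) 1, ℝ),
      lasDualFeasible (Gsub G e) 1 K →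
      ∃! F : C(↥(insert e (Vsub G e)) × ↥(insert e (Vsub G e)), ℝ),
        threePointFeasible G e F ∧ threePointCorresponds G e F K) := by
  have hphi : Continuous (phiMap G e) := phi_continuous G e hG
  refine ⟨?_, ?_, ?_⟩
  · have hset : {v : ℝ | ∃ F : C(↥(insert e (Vsub G e)) × ↥(insert e (Vsub G e)), ℝ),
        threePointFeasible G e F ∧ v = F (basePt G e, basePt G e)} =
        {v : ℝ | ∃ K : C(IndepSpace (Gsub G e) 1 × IndepSpace (Gsub G e) 1, ℝ),
          lasDualFeasible (Gsub G e) 1 K ∧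
          v = K (emptyIndep (Gsub G e) 1, emptyIndep (Gsub G e) 1)} := by
      ext v
      constructor
      · rintro ⟨F, hF, rfl⟩
        exact ⟨toK G e F, toK_feasible G e hF, by simp [toK, psi_empty]⟩
      · rintro ⟨K, hK, rfl⟩
        exact ⟨toF G e hphi K, toF_feasible G e hphi hK, by simp [toF, phi_base]⟩
    rw [threePointValue, lasDualValue, hset]
  · intro F hF
    refine ⟨toK G e F, ⟨toK_feasible G e hF, toK_corr G e F⟩, ?_⟩
    rintro K' ⟨-, hc⟩
    exact corr_unique_K G e hc
  · intro K hK
    refine ⟨toF G e hphi K, ⟨toF_feasible G e hphi hK, toF_corr G e hphi K⟩, ?_⟩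
    rintro F' ⟨-, hc⟩
    exact corr_unique_F G e hphi hc

end
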